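/- With the same setup (w = ∑ λ_n Φ(z_n), λ_n = (â_n − a_n) − i(b̂_n − b_n), reproducing kernel κ Hermitian), the sum ‖w‖²_ℍ + ‖v‖²_ℍ, where v = ∑ λ_n Φ(z_n)* and conjugation satisfies ⟨f*, g*⟩ = conj(⟨f, g⟩), equals 2∑_{n,m} (â_n − a_n)(â_m − a_m) κʳ(z_m, z_n) + 2∑_{n,m} (b̂_n − b_n)(b̂_m − b_m) κʳ(z_m, z_n); i.e., the cross terms involving κⁱ cancel. -/

import Mathlib

theorem stmt_12 {HC X : Type*} [NormedAddCommGroup HC] [InnerProductSpace ℂ HC]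
    [CompleteSpace HC]
    (J : HC → HC)
    (hJadd : ∀ f g, J (f + g) = J f + J g)
    (hJsmul : ∀ (c : ℂ) (f : HC), J (c • f) = (starRingEnd ℂ c) • J f)
    (hJinv : ∀ f, J (J f) = f)
    (hJinner : ∀ f g : HC, (inner ℂ (J f) (J g) : ℂ) = starRingEnd ℂ (inner ℂ f g : ℂ))
    (κ : X → X → ℂ) (hherm : ∀ z z', κ z z' = starRingEnd ℂ (κ z' z))
    (Φ : X → HC) (N : ℕ) (z : Fin N → X)
    (hrepr : ∀ n m : Fin N, (inner ℂ (Φ (z m)) (Φ (z n)) : ℂ) = κ (z m) (z n))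
    (a ahat b bhat : Fin N → ℝ) (lam : Fin N → ℂ)
    (hlam : ∀ n, lam n = ((ahat n - a n : ℝ) : ℂ) - Complex.I * ((bhat n - b n : ℝ) : ℂ))
    (w v : HC) (hw : w = ∑ n, lam n • Φ (z n)) (hv : v = ∑ n, lam n • J (Φ (z n))) :
    ‖w‖ ^ 2 + ‖v‖ ^ 2 =
      2 * (∑ n, ∑ m, (ahat n - a n) * (ahat m - a m) * (κ (z m) (z n)).re) +
      2 * (∑ n, ∑ m, (bhat n - b n) * (bhat m - b m) * (κ (z m) (z n)).re) := by
  have hww : (inner ℂ w w : ℂ) = ∑ n, ∑ m, (starRingEnd ℂ) (lam n) * lam m * κ (z n) (z m) := by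
    rw [hw, sum_inner]
    refine Finset.sum_congr rfl fun n _ => ?_
    rw [inner_sum]
    refine Finset.sum_congr rfl fun m _ => ?_
    rw [inner_smul_left, inner_smul_right, hrepr m n]
    ring
  have hvv : (inner ℂ v v : ℂ) = ∑ n, ∑ m, (starRingEnd ℂ) (lam n) * lam m *
      (starRingEnd ℂ) (κ (z n) (z m)) := by
    rw [hv, sum_inner]
    refine Finset.sum_congr rfl fun n _ => ?_
    rw [inner_sum]
    refine Finset.sum_congr rfl fun m _ => ?_
    rw [inner_smul_left, inner_smul_right, hJinner, hrepr m n]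
    ring
  have hnw : ‖w‖ ^ 2 = (inner ℂ w w : ℂ).re := by
    rw [← @inner_self_eq_norm_sq ℂ]; rfl
  have hnv : ‖v‖ ^ 2 = (inner ℂ v v : ℂ).re := by
    rw [← @inner_self_eq_norm_sq ℂ]; rfl
  rw [hnw, hnv, hww, hvv]
  simp only [Complex.re_sum, Finset.mul_sum, ← Finset.sum_add_distrib]
  refine Finset.sum_congr rfl fun n _ => Finset.sum_congr rfl fun m _ => ?_
  have hre : (κ (z m) (z n)).re = (κ (z n) (z m)).re := by
    rw [hherm (z m) (z n)]; exact Complex.conj_re _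
  rw [hre, hlam n, hlam m]
  simp [Complex.mul_re, Complex.mul_im, Complex.sub_re, Complex.sub_im]
  ring
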